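/- arXiv:2206.10321 — 10 statements merged into one kernel-verified Lean document; each statement's English description precedes it below -/
import Mathlib

section
/- Let 𝓕 be a family of finite simple graphs closed under restriction to connected components. If H₁ ≅_𝓕 H₁' and H₂ ≅_𝓕 H₂', then H₁ ⊔ H₂ ≅_𝓕 H₁' ⊔ H₂', where G ≅_𝓕 H means hom(F,G) = hom(F,H) for all F ∈ 𝓕. -/
open SimpleGraph

section Aux

variable {V W α β : Type*} {G : SimpleGraph V}

private lemma connected_induce_supp' (c : G.ConnectedComponent) :
    (G.induce c.supp).Connected := by
  classical
  obtain ⟨u, hu⟩ := c.exists_rep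
  have hu' : G.connectedComponentMk u = c := hu
  apply G.induce_connected_of_patches u (by simpa using hu')
  intro v hv
  have hv' : G.connectedComponentMk v = c := hv
  have hr : G.Reachable u v := ConnectedComponent.exact (hu'.trans hv'.symm)
  obtain ⟨p⟩ := hr
  refine ⟨{x | x ∈ p.support}, ?_, p.start_mem_support, p.end_mem_support,
    (p.connected_induce_support).preconnected _ _⟩
  intro x hx
  have hux : G.Reachable u x := ⟨p.takeUntil x hx⟩
  exact (ConnectedComponent.sound hux).symm.trans hu'

private lemma congr_fam {F : SimpleGraph V} {H : SimpleGraph W}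
    (g : ∀ c : F.ConnectedComponent, F.induce c.supp →g H)
    {c d : F.ConnectedComponent} (e : c = d) (v : V) (hv : v ∈ c.supp) :
    g c ⟨v, hv⟩ = g d ⟨v, e ▸ hv⟩ := by subst e; rfl

/-- A hom out of `F` is the same as a family of homs out of its components. -/
private def homEquivPi (F : SimpleGraph V) (H : SimpleGraph W) :
    (F →g H) ≃ ∀ c : F.ConnectedComponent, (F.induce c.supp →g H) where
  toFun f c := f.comp (Embedding.induce c.supp).toHom
  invFun g :=
    { toFun := fun v => g (F.connectedComponentMk v) ⟨v, rfl⟩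
      map_rel' := by
        intro v w h
        have e : F.connectedComponentMk w = F.connectedComponentMk v :=
          (ConnectedComponent.connectedComponentMk_eq_of_adj h).symm
        have hw : w ∈ (F.connectedComponentMk v).supp := e
        have h2 := (g (F.connectedComponentMk v)).map_rel'
          (a := ⟨v, rfl⟩) (b := ⟨w, hw⟩) (by exact h)
        show H.Adj (g (F.connectedComponentMk v) ⟨v, rfl⟩)
          (g (F.connectedComponentMk w) ⟨w, rfl⟩)
        rw [congr_fam g e w rfl]
        exact h2 }
  left_inv f := by ext v; rfl
  right_inv g := by
    funext c
    ext ⟨v, hv⟩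
    have hc : F.connectedComponentMk v = c := hv
    exact congr_fam g hc v rfl

private lemma sum_adj_isLeft {G₁ : SimpleGraph α} {G₂ : SimpleGraph β} {x y : α ⊕ β}
    (h : (G₁ ⊕g G₂).Adj x y) : x.isLeft = y.isLeft := by
  cases x <;> cases y <;> first | rfl | exact absurd h Bool.false_ne_true

private lemma sum_adj_inl {G₁ : SimpleGraph α} {G₂ : SimpleGraph β} {a b : α}
    (h : (G₁ ⊕g G₂).Adj (Sum.inl a) (Sum.inl b)) : G₁.Adj a b := h

private lemma sum_adj_inr {G₁ : SimpleGraph α} {G₂ : SimpleGraph β} {a b : β}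
    (h : (G₁ ⊕g G₂).Adj (Sum.inr a) (Sum.inr b)) : G₂.Adj a b := h

private lemma card_hom_sum [Finite V] [Finite α] [Finite β] {F : SimpleGraph V}
    (hF : F.Connected) (G₁ : SimpleGraph α) (G₂ : SimpleGraph β) :
    Nat.card (F →g G₁ ⊕g G₂) = Nat.card (F →g G₁) + Nat.card (F →g G₂) := by
  have hbij : Function.Bijective
      (Sum.elim (fun f : F →g G₁ => (Embedding.sumInl (H := G₂)).toHom.comp f)
                (fun f : F →g G₂ => (Embedding.sumInr (G := G₁)).toHom.comp f)) := by
    constructor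
    · rintro (f | f) (f' | f') h
      · congr 1; ext v; have := congrFun (congrArg DFunLike.coe h) v
        simpa using this
      · obtain ⟨v₀⟩ := hF.nonempty
        have := congrFun (congrArg DFunLike.coe h) v₀
        simp at this
      · obtain ⟨v₀⟩ := hF.nonempty
        have := congrFun (congrArg DFunLike.coe h) v₀
        simp at this
      · congr 1; ext v; have := congrFun (congrArg DFunLike.coe h) v
        simpa using this
    · intro f
      obtain ⟨v₀⟩ := hF.nonempty
      have key : ∀ v : V, (f v).isLeft = (f v₀).isLeft := by
        intro v
        obtain ⟨p⟩ := hF.preconnected v v₀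
        induction p with
        | nil => rfl
        | cons h p ih => rw [← ih]; exact sum_adj_isLeft (f.map_adj h)
      rcases hv₀ : f v₀ with a | a
      · have hl : ∀ v, (f v).isLeft := fun v => by rw [key v, hv₀]; rfl
        refine ⟨Sum.inl ⟨fun v => (f v).getLeft (hl v), ?_⟩, ?_⟩
        · intro v w h
          have hadj : (G₁ ⊕g G₂).Adj (f v) (f w) := f.map_adj h
          rw [← Sum.inl_getLeft (f v) (hl v), ← Sum.inl_getLeft (f w) (hl w)] at hadj
          exact sum_adj_inl hadj
        · ext v
          exact Sum.inl_getLeft (f v) (hl v)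
      · have hr : ∀ v, (f v).isRight := fun v => by
          have h1 := key v; rw [hv₀] at h1
          rcases hx : f v with b | b
          · rw [hx] at h1; simp at h1
          · rfl
        refine ⟨Sum.inr ⟨fun v => (f v).getRight (hr v), ?_⟩, ?_⟩
        · intro v w h
          have hadj : (G₁ ⊕g G₂).Adj (f v) (f w) := f.map_adj h
          rw [← Sum.inr_getRight (f v) (hr v), ← Sum.inr_getRight (f w) (hr w)] at hadj
          exact sum_adj_inr hadj
        · ext v
          exact Sum.inr_getRight (f v) (hr v)
  calc Nat.card (F →g G₁ ⊕g G₂) = Nat.card ((F →g G₁) ⊕ (F →g G₂)) :=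
        (Nat.card_congr (Equiv.ofBijective _ hbij)).symm
    _ = _ := Nat.card_sum

end Aux

/-- Graphs `H` and `H'` are homomorphism indistinguishable over the family `𝓕`:
`hom(F,H) = hom(F,H')` for every finite graph `F` in `𝓕`. -/
def HomIndist (𝓕 : ∀ ⦃V : Type⦄, SimpleGraph V → Prop)
    {β γ : Type} (H : SimpleGraph β) (H' : SimpleGraph γ) : Prop :=
  ∀ (V : Type) [Fintype V] (F : SimpleGraph V), 𝓕 F →
    Nat.card (F →g H) = Nat.card (F →g H')

/-- If `𝓕` is closed under restriction to connected components, then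
`H₁ ≅_𝓕 H₁'` and `H₂ ≅_𝓕 H₂'` imply `H₁ ⊔ H₂ ≅_𝓕 H₁' ⊔ H₂'`. -/
theorem homIndist_sum (𝓕 : ∀ ⦃V : Type⦄, SimpleGraph V → Prop)
    (hcc : ∀ (V : Type) (G : SimpleGraph V) (c : G.ConnectedComponent),
      𝓕 G → 𝓕 (SimpleGraph.induce c.supp G))
    {β₁ β₂ γ₁ γ₂ : Type} [Fintype β₁] [Fintype β₂] [Fintype γ₁] [Fintype γ₂]
    (H₁ : SimpleGraph β₁) (H₁' : SimpleGraph γ₁)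
    (H₂ : SimpleGraph β₂) (H₂' : SimpleGraph γ₂)
    (h₁ : HomIndist 𝓕 H₁ H₁') (h₂ : HomIndist 𝓕 H₂ H₂') :
    HomIndist 𝓕 (H₁ ⊕g H₂) (H₁' ⊕g H₂') := by
  classical
  intro V _ F hF
  haveI : Fintype F.ConnectedComponent := Fintype.ofFinite _
  have key : ∀ {δ₁ δ₂ : Type} [Finite δ₁] [Finite δ₂] (K₁ : SimpleGraph δ₁)
      (K₂ : SimpleGraph δ₂), Nat.card (F →g K₁ ⊕g K₂) =
        ∏ c : F.ConnectedComponent,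
          (Nat.card (F.induce c.supp →g K₁) + Nat.card (F.induce c.supp →g K₂)) := by
    intro δ₁ δ₂ _ _ K₁ K₂
    rw [Nat.card_congr (homEquivPi F (K₁ ⊕g K₂)), Nat.card_pi]
    exact Finset.prod_congr rfl fun c _ => card_hom_sum (connected_induce_supp' c) K₁ K₂
  rw [key H₁ H₂, key H₁' H₂']
  refine Finset.prod_congr rfl fun c _ => ?_
  haveI : Fintype c.supp := Fintype.ofFinite _
  rw [h₁ c.supp (F.induce c.supp) (hcc V F c hF), h₂ c.supp (F.induce c.supp) (hcc V F c hF)]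
end

section
/- Let 𝓕 be a family of finite simple graphs closed under restriction to connected components. If a graph G belongs to the homomorphism distinguishing closure cl(𝓕), then every connected component of G also belongs to cl(𝓕). -/
/-!
Write `hom(F, X)` for the number of homomorphisms `F →g X`. It is multiplicative over the
connected components of `F`, and for connected `F` additive over disjoint unions of targets.
Given `H ≅_𝓕 H'`, let `A = H + K` and `B = H' + K` with `K` complete, so that
`a_C = hom(C, A)` is positive for every component `C` of `G`; put `b_C = hom(C, B)`. As `𝓕` is
closed under components, `s·A + B ≅_𝓕 (s + 1)·A` for every `s : ℕ`, where `s·A`, the disjoint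
union of `s` copies of `A`, is `(⊥ : SimpleGraph (Fin s)) □ A`. Since `G ∈ cl(𝓕)`, this gives
`∏_C (s a_C + b_C) = ∏_C (s + 1) a_C` for all `s`, an identity of polynomials in `s`. The roots
`-b_C / a_C` of the left side must all equal `-1`, the only root of the right side, so `a_C = b_C`
and `hom(C, H) = hom(C, H')`.
-/

open SimpleGraph

/-- `F` belongs to the homomorphism distinguishing closure `cl(𝓕)`:
whenever `H ≅_𝓕 H'` (for finite graphs `H`, `H'`), also `hom(F,H) = hom(F,H')`. -/
def InHomClosure (𝓕 : ∀ ⦃V : Type⦄, SimpleGraph V → Prop)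
    {V : Type} (F : SimpleGraph V) : Prop :=
  ∀ (β γ : Type) [Fintype β] [Fintype γ] (H : SimpleGraph β) (H' : SimpleGraph γ),
    HomIndist 𝓕 H H' → Nat.card (F →g H) = Nat.card (F →g H')

namespace SimpleGraph

variable {U V α β : Type*} {F : SimpleGraph U}

lemma Preconnected.constant_of_adj {σ : Type*} (hF : F.Preconnected) {π : U → σ}
    (h : ∀ ⦃u v⦄, F.Adj u v → π u = π v) (u v : U) : π u = π v := by
  obtain ⟨p⟩ := hF u v
  induction p with
  | nil => rfl
  | cons ha _ ih => exact (h ha).trans ih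

lemma Embedding.exists_comp_eq_of_forall_mem_range {A : SimpleGraph α} {H : SimpleGraph β}
    (e : A ↪g H) (f : F →g H) (h : ∀ v, f v ∈ Set.range e) :
    ∃ g : F →g A, e.toHom.comp g = f := by
  choose g hg using h
  refine ⟨⟨g, fun {u v} huv => ?_⟩, DFunLike.ext _ _ hg⟩
  rw [← e.map_adj_iff, hg, hg]
  exact f.map_adj huv

lemma card_hom_sum_of_connected [Finite U] [Finite α] [Finite β] (hF : F.Connected)
    (A : SimpleGraph α) (B : SimpleGraph β) :
    Nat.card (F →g A ⊕g B) = Nat.card (F →g A) + Nat.card (F →g B) := by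
  obtain ⟨u₀⟩ := hF.nonempty
  let Φ : (F →g A) ⊕ (F →g B) → (F →g A ⊕g B) :=
    Sum.elim (Embedding.sumInl.toHom.comp ·) (Embedding.sumInr.toHom.comp ·)
  have hΦ : Function.Bijective Φ := by
    constructor
    · rintro (g | g) (g' | g') h
      · exact congrArg Sum.inl <|
          DFunLike.ext _ _ fun v => Sum.inl_injective (DFunLike.congr_fun h v)
      · exact (Sum.inl_ne_inr (DFunLike.congr_fun h u₀)).elim
      · exact (Sum.inr_ne_inl (DFunLike.congr_fun h u₀)).elim
      · exact congrArg Sum.inr <|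
          DFunLike.ext _ _ fun v => Sum.inr_injective (DFunLike.congr_fun h v)
    · intro f
      have hside := hF.preconnected.constant_of_adj (π := fun v => (f v).isLeft)
        (fun u v huv => by
          have := f.map_adj huv
          revert this
          rcases f u with _ | _ <;> rcases f v with _ | _ <;> simp)
      cases hu₀ : (f u₀).isLeft
      · obtain ⟨g, hg⟩ := Embedding.sumInr.exists_comp_eq_of_forall_mem_range f fun v => by
          have := hside v u₀
          simp only [hu₀, Sum.isLeft_eq_false] at this
          obtain ⟨b, hb⟩ := Sum.isRight_iff.mp this
          exact ⟨b, hb.symm⟩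
        exact ⟨Sum.inr g, hg⟩
      · obtain ⟨g, hg⟩ := Embedding.sumInl.exists_comp_eq_of_forall_mem_range f fun v => by
          have := hside v u₀
          rw [hu₀] at this
          obtain ⟨a, ha⟩ := Sum.isLeft_iff.mp this
          exact ⟨a, ha.symm⟩
        exact ⟨Sum.inl g, hg⟩
  rw [← Nat.card_eq_of_bijective Φ hΦ, Nat.card_sum]

lemma card_hom_boxProd_bot_of_connected (hF : F.Connected) (ι : Type*) (A : SimpleGraph α) :
    Nat.card (F →g (⊥ : SimpleGraph ι) □ A) = Nat.card ι * Nat.card (F →g A) := by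
  obtain ⟨u₀⟩ := hF.nonempty
  let Φ : ι × (F →g A) → (F →g (⊥ : SimpleGraph ι) □ A) :=
    fun ig => (boxProdRight ⊥ A ig.1).toHom.comp ig.2
  have hΦ : Function.Bijective Φ := by
    constructor
    · rintro ⟨i, g⟩ ⟨i', g'⟩ h
      have hi : i = i' := congrArg Prod.fst (DFunLike.congr_fun h u₀)
      exact Prod.ext hi (DFunLike.ext _ _ fun v => congrArg Prod.snd (DFunLike.congr_fun h v))
    · intro f
      have hlayer := hF.preconnected.constant_of_adj (π := fun v => (f v).1)
        (fun u v huv => ((f.map_adj huv).resolve_left (by simp)).2)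
      obtain ⟨g, hg⟩ := (boxProdRight ⊥ A (f u₀).1).exists_comp_eq_of_forall_mem_range f
        fun v => ⟨(f v).2, Prod.ext (hlayer u₀ v) rfl⟩
      exact ⟨((f u₀).1, g), hg⟩
  rw [← Nat.card_eq_of_bijective Φ hΦ, Nat.card_prod]

lemma ConnectedComponent.connected_induce_supp {G : SimpleGraph V} (C : G.ConnectedComponent) :
    (G.induce C.supp).Connected :=
  C.connected_toSimpleGraph

noncomputable def homEquivPiInduceSupp (G : SimpleGraph V) (H : SimpleGraph α) :
    (G →g H) ≃ ∀ C : G.ConnectedComponent, (G.induce C.supp →g H) where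
  toFun f C := f.comp (Embedding.induce C.supp).toHom
  invFun := G.homOfConnectedComponents
  left_inv _ := rfl
  right_inv F := by
    funext C
    ext ⟨v, hv⟩
    rw [ConnectedComponent.mem_supp_iff] at hv
    subst hv
    rfl

lemma card_hom_eq_prod_connectedComponent (G : SimpleGraph V) [Fintype G.ConnectedComponent]
    (H : SimpleGraph α) :
    Nat.card (G →g H) = ∏ C : G.ConnectedComponent, Nat.card (G.induce C.supp →g H) := by
  rw [Nat.card_congr (homEquivPiInduceSupp G H), Nat.card_pi]

end SimpleGraph

open Polynomial in
lemma eq_of_forall_prod_mul_add_eq_prod_succ_mul {ι : Type*} [Fintype ι] {a b : ι → ℕ}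
    (ha : ∀ i, a i ≠ 0) (h : ∀ s : ℕ, ∏ i, (s * a i + b i) = ∏ i, (s + 1) * a i) : a = b := by
  let P : ℚ[X] := ∏ i, (C (a i : ℚ) * X + C (b i : ℚ))
  let Q : ℚ[X] := ∏ i, C (a i : ℚ) * (X + 1)
  have hPQ : P = Q := by
    refine eq_of_infinite_eval_eq P Q (Set.infinite_of_injective_forall_mem Nat.cast_injective ?_)
    intro s
    simp only [Set.mem_ofPred_eq, P, Q, eval_prod, eval_add, eval_mul, eval_C, eval_X, eval_one]
    exact_mod_cast (by simpa only [mul_comm] using h s)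
  funext j
  have haj : (a j : ℚ) ≠ 0 := by exact_mod_cast ha j
  -- `P` vanishes at `-b j / a j`, while `-1` is the only root of `Q`.
  have hroot : (Q.eval (-(b j : ℚ) / a j)) = 0 := by
    rw [← hPQ, eval_prod]
    refine Finset.prod_eq_zero (Finset.mem_univ j) ?_
    simp only [eval_add, eval_mul, eval_C, eval_X]
    field_simp
    ring
  simp only [Q, eval_prod, eval_mul, eval_C, eval_add, eval_X, eval_one] at hroot
  obtain ⟨i, -, hi⟩ := Finset.prod_eq_zero_iff.mp hroot
  have : (b j : ℚ) = a j := by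
    rw [mul_eq_zero, or_iff_right (by exact_mod_cast ha i)] at hi
    field_simp at hi
    linarith
  exact_mod_cast this.symm

def ClosedUnderComponents (𝓕 : ∀ ⦃V : Type⦄, SimpleGraph V → Prop) : Prop :=
  ∀ (V : Type) (G : SimpleGraph V) (c : G.ConnectedComponent), 𝓕 G → 𝓕 (G.induce c.supp)

section

variable {𝓕 : ∀ ⦃V : Type⦄, SimpleGraph V → Prop}

lemma HomIndist.of_connected (hcc : ClosedUnderComponents 𝓕) {β γ : Type} {H : SimpleGraph β}
    {H' : SimpleGraph γ}
    (h : ∀ (U : Type) [Fintype U] (F : SimpleGraph U), F.Connected → 𝓕 F →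
      Nat.card (F →g H) = Nat.card (F →g H')) :
    HomIndist 𝓕 H H' := by
  classical
  intro U _ F hF
  rw [card_hom_eq_prod_connectedComponent, card_hom_eq_prod_connectedComponent]
  exact Finset.prod_congr rfl fun D _ => h _ _ D.connected_induce_supp (hcc U F D hF)

lemma InHomClosure.card_hom_induce_supp_eq (hcc : ClosedUnderComponents 𝓕) {V : Type} [Finite V]
    {G : SimpleGraph V} (hG : InHomClosure 𝓕 G) {α β : Type} [Fintype α] [Fintype β]
    {A : SimpleGraph α} {B : SimpleGraph β}
    (hAB : ∀ (U : Type) [Fintype U] (F : SimpleGraph U), F.Connected → 𝓕 F →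
      Nat.card (F →g A) = Nat.card (F →g B))
    (hA : ∀ C : G.ConnectedComponent, Nonempty (G.induce C.supp →g A))
    (C : G.ConnectedComponent) :
    Nat.card (G.induce C.supp →g A) = Nat.card (G.induce C.supp →g B) := by
  have := Fintype.ofFinite G.ConnectedComponent
  have hind (s : ℕ) :
      HomIndist 𝓕 ((⊥ : SimpleGraph (Fin s)).boxProd A ⊕g B)
        ((⊥ : SimpleGraph (Fin (s + 1))).boxProd A) :=
    HomIndist.of_connected hcc fun U _ F hFc hF => by
      rw [card_hom_sum_of_connected hFc, card_hom_boxProd_bot_of_connected hFc,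
        card_hom_boxProd_bot_of_connected hFc, hAB U F hFc hF, Nat.card_fin, Nat.card_fin]
      ring
  let a (C : G.ConnectedComponent) := Nat.card (G.induce C.supp →g A)
  let b (C : G.ConnectedComponent) := Nat.card (G.induce C.supp →g B)
  have hprod (s : ℕ) : ∏ C, (s * a C + b C) = ∏ C, (s + 1) * a C :=
    calc ∏ C, (s * a C + b C)
        = ∏ C, Nat.card (G.induce C.supp →g (⊥ : SimpleGraph (Fin s)).boxProd A ⊕g B) :=
          Finset.prod_congr rfl fun C _ => by
            rw [card_hom_sum_of_connected C.connected_induce_supp,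
              card_hom_boxProd_bot_of_connected C.connected_induce_supp, Nat.card_fin]
      _ = ∏ C, Nat.card (G.induce C.supp →g (⊥ : SimpleGraph (Fin (s + 1))).boxProd A) := by
          simpa only [card_hom_eq_prod_connectedComponent] using hG _ _ _ _ (hind s)
      _ = ∏ C, (s + 1) * a C :=
          Finset.prod_congr rfl fun C _ => by
            rw [card_hom_boxProd_bot_of_connected C.connected_induce_supp, Nat.card_fin]
  have ha (C : G.ConnectedComponent) : a C ≠ 0 := (Nat.card_pos_iff.2 ⟨hA C, inferInstance⟩).ne'
  exact congrFun (eq_of_forall_prod_mul_add_eq_prod_succ_mul ha hprod) C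

end

/-- If `𝓕` is closed under restriction to connected components and the
finite graph `G` belongs to `cl(𝓕)`, then every connected component of `G` belongs to
`cl(𝓕)`. -/
theorem inHomClosure_connectedComponent (𝓕 : ∀ ⦃V : Type⦄, SimpleGraph V → Prop)
    (hcc : ∀ (V : Type) (G : SimpleGraph V) (c : G.ConnectedComponent),
      𝓕 G → 𝓕 (SimpleGraph.induce c.supp G))
    {V : Type} [Fintype V] (G : SimpleGraph V) (hG : InHomClosure 𝓕 G)
    (c : G.ConnectedComponent) :
    InHomClosure 𝓕 (SimpleGraph.induce c.supp G) := by
  intro β γ _ _ H H' hHH'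
  let K : SimpleGraph V := ⊤
  have hconn (U : Type) [Fintype U] (F : SimpleGraph U) (hFc : F.Connected) (hF : 𝓕 F) :
      Nat.card (F →g H ⊕g K) = Nat.card (F →g H' ⊕g K) := by
    rw [card_hom_sum_of_connected hFc, card_hom_sum_of_connected hFc, hHH' U F hF]
  have hK (C : G.ConnectedComponent) : Nonempty (G.induce C.supp →g H ⊕g K) :=
    ⟨Embedding.sumInr.toHom.comp ((Hom.ofLE le_top).comp (Embedding.induce _).toHom)⟩
  have h := hG.card_hom_induce_supp_eq hcc hconn hK c
  rw [card_hom_sum_of_connected c.connected_induce_supp,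
    card_hom_sum_of_connected c.connected_induce_supp] at h
  exact Nat.add_right_cancel h
end

section
/- Let G be a connected finite simple graph, and for U ⊆ V(G) let G_U be the graph with vertices (v,S) where v ∈ V(G), S ⊆ E(v), and |S| ≡ |{v} ∩ U| mod 2, with (v,S) adjacent to (u,T) iff uv ∈ E(G) and uv ∉ S △ T. If U, U' ⊆ V(G) satisfy |U| ≡ |U'| mod 2, then G_U ≅ G_{U'}. -/
open SimpleGraph

variable {V : Type}

/-- Vertices of the parity construction `G_U`: pairs `(v, S)` with `S` a set of edges
incident to `v` whose cardinality has the parity of `|{v} ∩ U|`. -/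
def ParityVert (G : SimpleGraph V) (U : Set V) : Type :=
  {p : V × Set (Sym2 V) //
    p.2 ⊆ G.incidenceSet p.1 ∧ p.2.ncard % 2 = ({p.1} ∩ U : Set V).ncard % 2}

/-- The parity construction `G_U`: `(v,S)` is adjacent to `(u,T)` iff `uv ∈ E(G)` and
`uv ∉ S △ T`. -/
def parityGraph (G : SimpleGraph V) (U : Set V) : SimpleGraph (ParityVert G U) where
  Adj x y := G.Adj x.1.1 y.1.1 ∧ s(x.1.1, y.1.1) ∉ symmDiff x.1.2 y.1.2
  symm := ⟨by
    rintro x y ⟨h1, h2⟩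
    exact ⟨h1.symm, by rw [Sym2.eq_swap, symmDiff_comm]; exact h2⟩⟩
  loopless := ⟨fun x h => G.irrefl h.1⟩

/-! Since `|U △ U'|` is even and `G` is connected, there is a `(U △ U')`-join: a set `F` of
edges meeting every vertex `v` in a number of edges that is odd iff `v ∈ U △ U'`. It is the
symmetric difference of the edge sets of walks from a fixed root to the vertices of `U △ U'`.
Replacing `S` by `S △ (F ∩ E(v))` at every vertex `(v, S)` of `G_U` changes the parity of `|S|`
exactly at the vertices of `U △ U'`, and it preserves adjacency because an edge `uv` lies in
`F ∩ E(u)` iff it lies in `F ∩ E(v)`. -/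

open scoped symmDiff

namespace Set

variable {α : Type*}

theorem ncard_symmDiff_add_two_mul_ncard_inter [Finite α] (s t : Set α) :
    (s ∆ t).ncard + 2 * (s ∩ t).ncard = s.ncard + t.ncard := by
  have hsub : s ∩ t ⊆ s ∪ t := inter_subset_left.trans subset_union_left
  rw [symmDiff_eq_sup_sdiff_inf, ← ncard_union_add_ncard_inter s t]
  change ((s ∪ t) \ (s ∩ t)).ncard + _ = _
  rw [ncard_sdiff hsub]
  have := ncard_le_ncard hsub
  omega

theorem ncard_symmDiff_cast_zmod_two [Finite α] (s t : Set α) :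
    ((s ∆ t).ncard : ZMod 2) = s.ncard + t.ncard := by
  have h := congrArg (Nat.cast : ℕ → ZMod 2) (ncard_symmDiff_add_two_mul_ncard_inter s t)
  rwa [Nat.cast_add, Nat.cast_mul, ZMod.natCast_self, zero_mul, add_zero, Nat.cast_add] at h

theorem ncard_singleton_inter_eq_ite (a : α) (s : Set α) [Decidable (a ∈ s)] :
    ({a} ∩ s).ncard = if a ∈ s then 1 else 0 := by
  split_ifs with h
  · rw [singleton_inter_of_mem h, ncard_singleton]
  · rw [singleton_inter_eq_empty.2 h, ncard_empty]

end Set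

namespace SimpleGraph

variable (G : SimpleGraph V)

noncomputable def incidenceParity (F : Set (Sym2 V)) (v : V) : ZMod 2 :=
  (F ∩ G.incidenceSet v).ncard

theorem incidenceParity_symmDiff [Finite V] (F F' : Set (Sym2 V)) (v : V) :
    G.incidenceParity (F ∆ F') v = G.incidenceParity F v + G.incidenceParity F' v := by
  rw [incidenceParity, incidenceParity, incidenceParity, ← Set.ncard_symmDiff_cast_zmod_two,
    Set.inter_symmDiff_distrib_right]

variable {G} [DecidableEq V]

theorem incidenceParity_singleton {a c : V} (h : G.Adj a c) (v : V) :
    G.incidenceParity {s(a, c)} v = (if v = a then 1 else 0) + (if v = c then 1 else 0) := by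
  have hmem : s(a, c) ∈ G.incidenceSet v ↔ v = a ∨ v = c := by
    rw [mk'_mem_incidenceSet_iff, and_iff_right h]
  classical
  simp only [incidenceParity, Set.ncard_singleton_inter_eq_ite, hmem]
  by_cases hva : v = a <;> by_cases hvc : v = c
  · exact absurd (hva.symm.trans hvc) h.ne
  all_goals simp [hva, hvc, h.ne, h.ne.symm]

theorem Walk.exists_incidenceParity_eq [Finite V] {a b : V} (w : G.Walk a b) :
    ∃ F : Set (Sym2 V), ∀ v,
      G.incidenceParity F v = (if v = a then 1 else 0) + (if v = b then 1 else 0) := by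
  induction w with
  | nil => exact ⟨∅, fun v => by simp [incidenceParity, CharTwo.add_self_eq_zero]⟩
  | @cons a c b h w ih =>
    obtain ⟨F, hF⟩ := ih
    refine ⟨{s(a, c)} ∆ F, fun v => ?_⟩
    rw [incidenceParity_symmDiff, incidenceParity_singleton h, hF]
    linear_combination CharTwo.add_self_eq_zero (if v = c then (1 : ZMod 2) else 0)

theorem Preconnected.exists_incidenceParity_eq [Finite V] (hG : G.Preconnected) (r : V)
    (T : Finset V) :
    ∃ F : Set (Sym2 V), ∀ v,
      G.incidenceParity F v = (if v ∈ T then 1 else 0) + T.card * (if v = r then 1 else 0) := by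
  induction T using Finset.induction_on with
  | empty => exact ⟨∅, fun v => by simp [incidenceParity]⟩
  | @insert t T htT ih =>
    obtain ⟨F, hF⟩ := ih
    obtain ⟨w⟩ := hG r t
    obtain ⟨Fw, hFw⟩ := w.exists_incidenceParity_eq
    refine ⟨F ∆ Fw, fun v => ?_⟩
    have hmem : (if v ∈ insert t T then (1 : ZMod 2) else 0)
        = (if v = t then 1 else 0) + if v ∈ T then 1 else 0 := by
      by_cases hvt : v = t
      · subst hvt; simp [htT]
      · simp [hvt]
    rw [incidenceParity_symmDiff, hF, hFw, hmem, Finset.card_insert_of_notMem htT]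
    push_cast
    ring

theorem Connected.exists_incidenceParity_eq [Finite V] (hG : G.Connected) (T : Finset V)
    (hT : (T.card : ZMod 2) = 0) :
    ∃ F : Set (Sym2 V), ∀ v, G.incidenceParity F v = if v ∈ T then 1 else 0 := by
  obtain ⟨r⟩ := hG.nonempty
  obtain ⟨F, hF⟩ := hG.preconnected.exists_incidenceParity_eq r T
  exact ⟨F, fun v => by rw [hF, hT, zero_mul, add_zero]⟩

end SimpleGraph

namespace ParityVert

variable {G : SimpleGraph V} {U U' : Set V}

theorem cast_ncard (x : ParityVert G U) : (x.1.2.ncard : ZMod 2) = ({x.1.1} ∩ U).ncard :=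
  (ZMod.natCast_eq_natCast_iff' _ _ 2).2 x.2.2

variable [Finite V] (F : Set (Sym2 V))
  (hF : ∀ v, G.incidenceParity F v = ({v} ∩ U).ncard + ({v} ∩ U').ncard)

noncomputable def toggle (x : ParityVert G U) : ParityVert G U' :=
  ⟨(x.1.1, x.1.2 ∆ (F ∩ G.incidenceSet x.1.1)),
    symmDiff_le_sup.trans (Set.union_subset x.2.1 Set.inter_subset_right),
    (ZMod.natCast_eq_natCast_iff' _ _ 2).1 <| by
      rw [Set.ncard_symmDiff_cast_zmod_two, x.cast_ncard, ← incidenceParity, hF]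
      linear_combination CharTwo.add_self_eq_zero (({x.1.1} ∩ U).ncard : ZMod 2)⟩

end ParityVert

noncomputable def parityGraphIsoOfIncidenceParity [Finite V] {G : SimpleGraph V} {U U' : Set V}
    (F : Set (Sym2 V)) (hF : ∀ v, G.incidenceParity F v = ({v} ∩ U).ncard + ({v} ∩ U').ncard) :
    parityGraph G U ≃g parityGraph G U' where
  toFun := ParityVert.toggle F hF
  invFun := ParityVert.toggle F fun v => (hF v).trans (add_comm _ _)
  left_inv _ := Subtype.ext (Prod.ext rfl (symmDiff_symmDiff_cancel_right _ _))
  right_inv _ := Subtype.ext (Prod.ext rfl (symmDiff_symmDiff_cancel_right _ _))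
  map_rel_iff' {x y} := by
    refine and_congr_right fun hxy => not_congr ?_
    have hx : s(x.1.1, y.1.1) ∈ G.incidenceSet x.1.1 := G.mk'_mem_incidenceSet_left_iff.2 hxy
    have hy : s(x.1.1, y.1.1) ∈ G.incidenceSet y.1.1 := G.mk'_mem_incidenceSet_right_iff.2 hxy
    change s(x.1.1, y.1.1) ∈
        (x.1.2 ∆ (F ∩ G.incidenceSet x.1.1)) ∆ (y.1.2 ∆ (F ∩ G.incidenceSet y.1.1)) ↔
      s(x.1.1, y.1.1) ∈ x.1.2 ∆ y.1.2
    simp only [Set.mem_symmDiff, Set.mem_inter_iff, hx, hy, and_true]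
    tauto

/-- For a connected finite simple graph `G`, if `U, U' ⊆ V(G)` have the
same parity, then `G_U ≅ G_{U'}`. -/
theorem parityGraph_iso_of_parity [Fintype V] (G : SimpleGraph V) (hG : G.Connected)
    (U U' : Set V) (h : U.ncard % 2 = U'.ncard % 2) :
    Nonempty (parityGraph G U ≃g parityGraph G U') := by
  classical
  have hT : ((U ∆ U').toFinset.card : ZMod 2) = 0 := by
    rw [← Set.ncard_eq_toFinset_card', Set.ncard_symmDiff_cast_zmod_two,
      (ZMod.natCast_eq_natCast_iff' _ _ 2).2 h, CharTwo.add_self_eq_zero]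
  obtain ⟨F, hF⟩ := hG.exists_incidenceParity_eq _ hT
  refine ⟨parityGraphIsoOfIncidenceParity F fun v => ?_⟩
  rw [hF, ← Set.ncard_symmDiff_cast_zmod_two, ← Set.inter_symmDiff_distrib_left,
    Set.ncard_singleton_inter_eq_ite]
  simp only [Set.mem_toFinset, Nat.cast_ite, Nat.cast_one, Nat.cast_zero]
end

section
/- If ψ is an oddomorphism from F to G and a ∈ V(F) is an odd vertex with respect to ψ, then deg_F(a) ≥ deg_G(ψ(a)). Consequently, if F admits a weak oddomorphism to G, then the maximum degree of F is at least the maximum degree of G. -/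
/-!
An odd vertex `a` has an odd, hence nonzero, number of neighbours in the fibre over each
neighbour of `ψ a`, so `ψ` maps `N_F(a)` onto `N_G(ψ a)`. Every fibre of an oddomorphism
contains an odd vertex, so each degree of `G` is bounded by a degree of `F`; for a weak
oddomorphism the bound passes from the subgraph `F'` to `F`.
-/

open SimpleGraph

variable {α β : Type}

/-- A vertex `a` of `F` is *odd* with respect to a homomorphism `ψ : F → G` if
`|N_F(a) ∩ ψ⁻¹(v)|` is odd for every `v` adjacent to `ψ a` in `G`. -/
def IsOddVertex (F : SimpleGraph α) (G : SimpleGraph β) (ψ : F →g G) (a : α) : Prop :=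
  ∀ v : β, G.Adj (ψ a) v → Odd (F.neighborSet a ∩ (⇑ψ) ⁻¹' {v}).ncard

/-- A vertex `a` of `F` is *even* with respect to a homomorphism `ψ : F → G` if
`|N_F(a) ∩ ψ⁻¹(v)|` is even for every `v` adjacent to `ψ a` in `G`. -/
def IsEvenVertex (F : SimpleGraph α) (G : SimpleGraph β) (ψ : F →g G) (a : α) : Prop :=
  ∀ v : β, G.Adj (ψ a) v → Even (F.neighborSet a ∩ (⇑ψ) ⁻¹' {v}).ncard

/-- An *oddomorphism* from `F` to `G` is a homomorphism `ψ` such that every vertex of `F`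
is odd or even w.r.t. `ψ`, and every fibre `ψ⁻¹(v)` contains an odd number of odd
vertices. -/
def IsOddomorphism (F : SimpleGraph α) (G : SimpleGraph β) (ψ : F →g G) : Prop :=
  (∀ a : α, IsOddVertex F G ψ a ∨ IsEvenVertex F G ψ a) ∧
  (∀ v : β, Odd {a : α | ψ a = v ∧ IsOddVertex F G ψ a}.ncard)

/-- A homomorphism `ψ : F → G` is a *weak oddomorphism* if its restriction to (the vertex
set of) some subgraph `F'` of `F` is an oddomorphism from `F'` to `G`. -/
def IsWeakOddomorphism (F : SimpleGraph α) (G : SimpleGraph β) (ψ : F →g G) : Prop :=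
  ∃ F' : F.Subgraph, IsOddomorphism F'.coe G (ψ.comp F'.hom)

variable {F : SimpleGraph α} {G : SimpleGraph β} {ψ : F →g G}

theorem IsOddVertex.surjOn_neighborSet {a : α} (h : IsOddVertex F G ψ a) :
    Set.SurjOn ψ (F.neighborSet a) (G.neighborSet (ψ a)) := fun v hv ↦
  Set.nonempty_of_ncard_ne_zero (h v hv).pos.ne'

theorem IsOddVertex.degree_le {a : α} [Fintype (F.neighborSet a)]
    [Fintype (G.neighborSet (ψ a))] (h : IsOddVertex F G ψ a) :
    G.degree (ψ a) ≤ F.degree a := by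
  rw [← card_neighborFinset_eq_degree, ← card_neighborFinset_eq_degree]
  exact Finset.card_le_card_of_surjOn ψ (by simpa using h.surjOn_neighborSet)

theorem IsOddomorphism.exists_isOddVertex (h : IsOddomorphism F G ψ) (v : β) :
    ∃ a, ψ a = v ∧ IsOddVertex F G ψ a :=
  Set.nonempty_of_ncard_ne_zero (h.2 v).pos.ne'

theorem IsOddomorphism.maxDegree_le [Fintype α] [Fintype β] [DecidableRel F.Adj]
    [DecidableRel G.Adj] (h : IsOddomorphism F G ψ) : G.maxDegree ≤ F.maxDegree :=
  G.maxDegree_le_of_forall_degree_le _ fun v ↦ by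
    obtain ⟨a, rfl, ha⟩ := h.exists_isOddVertex v
    exact ha.degree_le.trans (F.degree_le_maxDegree a)

theorem IsWeakOddomorphism.maxDegree_le [Fintype α] [Fintype β] [DecidableRel F.Adj]
    [DecidableRel G.Adj] (h : IsWeakOddomorphism F G ψ) : G.maxDegree ≤ F.maxDegree := by
  classical
  obtain ⟨F', hF'⟩ := h
  exact hF'.maxDegree_le.trans F'.coe_isContained.maxDegree_mono

/-- If `ψ` is an oddomorphism from `F` to `G` and `a` is an odd vertex
w.r.t. `ψ`, then `deg_F(a) ≥ deg_G(ψ a)`; consequently, if `F` admits a weak oddomorphism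
to `G` then `Δ(F) ≥ Δ(G)`. -/
theorem oddomorphism_degree [Fintype α] [Fintype β]
    (F : SimpleGraph α) (G : SimpleGraph β)
    [DecidableRel F.Adj] [DecidableRel G.Adj] :
    (∀ ψ : F →g G, IsOddomorphism F G ψ →
      ∀ a : α, IsOddVertex F G ψ a → G.degree (ψ a) ≤ F.degree a) ∧
    ((∃ ψ : F →g G, IsWeakOddomorphism F G ψ) → G.maxDegree ≤ F.maxDegree) :=
  ⟨fun _ _ _ ha ↦ ha.degree_le, fun ⟨_, hψ⟩ ↦ hψ.maxDegree_le⟩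
end

section
/- If ψ₁ is an oddomorphism from F to G and ψ₂ is an oddomorphism from G to H, then ψ₂ ∘ ψ₁ is an oddomorphism from F to H. Moreover, a vertex a ∈ V(F) is odd with respect to ψ₂ ∘ ψ₁ if and only if a is odd w.r.t. ψ₁ and ψ₁(a) is odd w.r.t. ψ₂. -/
open SimpleGraph

variable {α β : Type}

section Aux

variable {δ : Type}

lemma aux_odd_sum_iff (t : Finset δ) (f : δ → ℕ) (h : ∀ v ∈ t, Odd (f v)) :
    Odd (∑ v ∈ t, f v) ↔ Odd t.card := by
  have hmod : (∑ v ∈ t, f v) % 2 = t.card % 2 := by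
    rw [Finset.sum_nat_mod, Finset.sum_congr rfl (fun v hv => Nat.odd_iff.mp (h v hv)),
      Finset.sum_const, smul_eq_mul, mul_one]
  rw [Nat.odd_iff, Nat.odd_iff, hmod]

lemma aux_even_sum (t : Finset δ) (f : δ → ℕ) (h : ∀ v ∈ t, Even (f v)) :
    Even (∑ v ∈ t, f v) := by
  have hmod : (∑ v ∈ t, f v) % 2 = 0 := by
    rw [Finset.sum_nat_mod, Finset.sum_congr rfl (fun v hv => Nat.even_iff.mp (h v hv))]
    simp
  simpa [Nat.even_iff] using hmod

lemma aux_ncard_eq_sum {α β : Type} [Fintype α]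
    (s : Set α) (t : Set β) [Fintype ↑t] (f : α → β) (h : ∀ x ∈ s, f x ∈ t) :
    s.ncard = ∑ v ∈ t.toFinset, (s ∩ f ⁻¹' {v}).ncard := by
  classical
  rw [Set.ncard_eq_toFinset_card' s]
  rw [Finset.card_eq_sum_card_fiberwise (t := t.toFinset) (f := f)
    (fun x hx => Set.mem_toFinset.mpr (h x (Set.mem_toFinset.mp hx)))]
  refine Finset.sum_congr rfl fun v _ => ?_
  rw [Set.ncard_eq_toFinset_card']
  congr 1
  ext x
  simp [Set.mem_toFinset, and_comm]

end Aux

/-- The composition of oddomorphisms is an oddomorphism, and a vertex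
`a` of `F` is odd w.r.t. `ψ₂ ∘ ψ₁` iff `a` is odd w.r.t. `ψ₁` and `ψ₁ a` is odd w.r.t.
`ψ₂`. -/
theorem oddomorphism_comp {γ : Type} [Fintype α] [Fintype β] [Fintype γ]
    (F : SimpleGraph α) (G : SimpleGraph β) (H : SimpleGraph γ)
    (ψ₁ : F →g G) (ψ₂ : G →g H)
    (h₁ : IsOddomorphism F G ψ₁) (h₂ : IsOddomorphism G H ψ₂) :
    IsOddomorphism F H (ψ₂.comp ψ₁) ∧
    ∀ a : α, IsOddVertex F H (ψ₂.comp ψ₁) a ↔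
      (IsOddVertex F G ψ₁ a ∧ IsOddVertex G H ψ₂ (ψ₁ a)) := by
  classical
  obtain ⟨h₁tot, h₁fib⟩ := h₁
  obtain ⟨h₂tot, h₂fib⟩ := h₂
  -- key cardinality decomposition
  have key : ∀ (a : α) (w : γ),
      (F.neighborSet a ∩ (⇑(ψ₂.comp ψ₁)) ⁻¹' {w}).ncard
        = ∑ v ∈ (G.neighborSet (ψ₁ a) ∩ (⇑ψ₂) ⁻¹' {w}).toFinset,
            (F.neighborSet a ∩ (⇑ψ₁) ⁻¹' {v}).ncard := by
    intro a w
    rw [aux_ncard_eq_sum (F.neighborSet a ∩ (⇑(ψ₂.comp ψ₁)) ⁻¹' {w})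
      (G.neighborSet (ψ₁ a) ∩ (⇑ψ₂) ⁻¹' {w}) (⇑ψ₁)
      (by
        rintro x ⟨hx1, hx2⟩
        exact ⟨ψ₁.map_adj hx1, hx2⟩)]
    refine Finset.sum_congr rfl fun v hv => ?_
    obtain ⟨hv1, hv2⟩ := Set.mem_toFinset.mp hv
    congr 1
    ext x
    simp only [Set.mem_inter_iff, Set.mem_preimage, Set.mem_singleton_iff,
      SimpleGraph.mem_neighborSet, SimpleGraph.Hom.comp_apply]
    constructor
    · rintro ⟨⟨hadj, _⟩, hxv⟩; exact ⟨hadj, hxv⟩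
    · rintro ⟨hadj, hxv⟩
      exact ⟨⟨hadj, show ψ₂ (ψ₁ x) = w by rw [hxv]; exact hv2⟩, hxv⟩
  have mem_t : ∀ (a : α) (w : γ) (v : β),
      v ∈ (G.neighborSet (ψ₁ a) ∩ (⇑ψ₂) ⁻¹' {w}).toFinset →
        G.Adj (ψ₁ a) v := fun a w v hv => (Set.mem_toFinset.mp hv).1
  have iffpart : ∀ a : α, IsOddVertex F H (ψ₂.comp ψ₁) a ↔
      (IsOddVertex F G ψ₁ a ∧ IsOddVertex G H ψ₂ (ψ₁ a)) := by
    intro a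
    constructor
    · intro hodd
      have haodd : IsOddVertex F G ψ₁ a := by
        rcases h₁tot a with h | h
        · exact h
        · intro v hv
          exfalso
          have hw : H.Adj ((ψ₂.comp ψ₁) a) (ψ₂ v) := ψ₂.map_adj hv
          have h1 := hodd (ψ₂ v) hw
          rw [key a (ψ₂ v)] at h1
          exact (Nat.not_odd_iff_even.mpr
            (aux_even_sum _ _ (fun u hu => h u (mem_t a (ψ₂ v) u hu)))) h1
      refine ⟨haodd, ?_⟩
      intro w hw
      have hw' : H.Adj ((ψ₂.comp ψ₁) a) w := hw
      have h1 := hodd w hw'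
      rw [key a w] at h1
      have := (aux_odd_sum_iff _ _
        (fun u hu => haodd u (mem_t a w u hu))).mp h1
      rwa [← Set.ncard_eq_toFinset_card'] at this
    · rintro ⟨haodd, hbodd⟩ w hw
      rw [key a w]
      refine (aux_odd_sum_iff _ _ (fun u hu => haodd u (mem_t a w u hu))).mpr ?_
      rw [← Set.ncard_eq_toFinset_card']
      exact hbodd w hw
  refine ⟨⟨?_, ?_⟩, iffpart⟩
  · -- every vertex is odd or even w.r.t. the composition
    intro a
    rcases h₁tot a with h | h
    · rcases h₂tot (ψ₁ a) with h' | h'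
      · exact Or.inl ((iffpart a).mpr ⟨h, h'⟩)
      · refine Or.inr fun w hw => ?_
        rw [key a w, ← Nat.not_odd_iff_even,
          aux_odd_sum_iff _ _ (fun u hu => h u (mem_t a w u hu)),
          Nat.not_odd_iff_even, ← Set.ncard_eq_toFinset_card']
        exact h' w hw
    · refine Or.inr fun w hw => ?_
      rw [key a w]
      exact aux_even_sum _ _ (fun u hu => h u (mem_t a w u hu))
  · -- fibre condition
    intro u
    have hset : {a : α | (ψ₂.comp ψ₁) a = u ∧ IsOddVertex F H (ψ₂.comp ψ₁) a}
        = {a : α | ψ₂ (ψ₁ a) = u ∧ (IsOddVertex F G ψ₁ a ∧ IsOddVertex G H ψ₂ (ψ₁ a))} := by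
      ext a
      simp only [Set.mem_setOf_eq, iffpart a]
      exact Iff.rfl
    rw [hset]
    rw [aux_ncard_eq_sum
      {a : α | ψ₂ (ψ₁ a) = u ∧ (IsOddVertex F G ψ₁ a ∧ IsOddVertex G H ψ₂ (ψ₁ a))}
      {v : β | ψ₂ v = u ∧ IsOddVertex G H ψ₂ v} (⇑ψ₁)
      (by rintro x ⟨hx1, hx2, hx3⟩; exact ⟨hx1, hx3⟩)]
    refine (aux_odd_sum_iff _ _ ?_).mpr ?_
    · intro v hv
      obtain ⟨hv1, hv2⟩ := Set.mem_toFinset.mp hv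
      have hseteq : {a : α | ψ₂ (ψ₁ a) = u ∧
          (IsOddVertex F G ψ₁ a ∧ IsOddVertex G H ψ₂ (ψ₁ a))} ∩ (⇑ψ₁) ⁻¹' {v}
          = {a : α | ψ₁ a = v ∧ IsOddVertex F G ψ₁ a} := by
        ext a
        simp only [Set.mem_inter_iff, Set.mem_setOf_eq, Set.mem_preimage,
          Set.mem_singleton_iff]
        constructor
        · rintro ⟨⟨_, ho, _⟩, hav⟩; exact ⟨hav, ho⟩
        · rintro ⟨hav, ho⟩
          exact ⟨⟨by rw [hav, hv1], ho, by rw [hav]; exact hv2⟩, hav⟩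
      rw [hseteq]
      exact h₁fib v
    · rw [← Set.ncard_eq_toFinset_card']
      exact h₂fib u
end

section
/- If G and H are finite simple graphs such that G admits a weak oddomorphism to H and H admits a weak oddomorphism to G, then G and H are isomorphic. Hence the weak oddomorphism relation is a partial order on isomorphism classes of finite simple graphs. -/
open SimpleGraph

variable {α β : Type}

/-- Any weak oddomorphism is surjective on vertices. -/
lemma IsWeakOddomorphism.surjective {F : SimpleGraph α} {G : SimpleGraph β} {ψ : F →g G}
    (h : IsWeakOddomorphism F G ψ) : Function.Surjective ψ := by
  obtain ⟨F', _, h2⟩ := h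
  intro v
  have hv := h2 v
  have hne : {a : F'.verts | (ψ.comp F'.hom) a = v ∧
      IsOddVertex F'.coe G (ψ.comp F'.hom) a}.Nonempty := by
    apply Set.nonempty_of_ncard_ne_zero
    intro h0
    rw [h0] at hv
    simpa using hv
  obtain ⟨a, ha, _⟩ := hne
  exact ⟨a.val, ha⟩

/-- antisymmetry of the weak oddomorphism order. If finite simple
graphs `G` and `H` each admit a weak oddomorphism to the other, then they are
isomorphic; hence the weak oddomorphism relation is a partial order on isomorphism
classes of finite simple graphs. -/
theorem weakOddomorphism_antisymm [Fintype α] [Fintype β]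
    (G : SimpleGraph α) (H : SimpleGraph β)
    (h₁ : ∃ ψ : G →g H, IsWeakOddomorphism G H ψ)
    (h₂ : ∃ φ : H →g G, IsWeakOddomorphism H G φ) :
    Nonempty (G ≃g H) := by
  obtain ⟨ψ, hψ⟩ := h₁
  obtain ⟨φ, hφ⟩ := h₂
  have hsψ : Function.Surjective ψ := hψ.surjective
  have hsφ : Function.Surjective φ := hφ.surjective
  have hcard : Fintype.card α = Fintype.card β :=
    le_antisymm (Fintype.card_le_of_surjective _ hsφ) (Fintype.card_le_of_surjective _ hsψ)
  have hbψ : Function.Bijective ψ :=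
    (Fintype.bijective_iff_surjective_and_card ψ).2 ⟨hsψ, hcard⟩
  have hbφ : Function.Bijective φ :=
    (Fintype.bijective_iff_surjective_and_card φ).2 ⟨hsφ, hcard.symm⟩
  set f : α → α := (⇑φ) ∘ (⇑ψ) with hfdef
  have hbf : Function.Bijective f := hbφ.comp hbψ
  have hf : ∀ a b, G.Adj a b → G.Adj (f a) (f b) := fun a b h => φ.map_adj (ψ.map_adj h)
  let e : Equiv.Perm α := Equiv.ofBijective f hbf
  set n := orderOf e with hndef
  have hn : 0 < n := orderOf_pos e
  have he : e ^ n = 1 := pow_orderOf_eq_one e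
  have hiter : ∀ (m : ℕ) (x : α), (e ^ m) x = f^[m] x := by
    intro m
    induction m with
    | zero => simp
    | succ k ih =>
      intro x
      rw [pow_succ, Equiv.Perm.mul_apply, Function.iterate_succ_apply, ← ih]
      rfl
  have hid : ∀ x, f^[n] x = x := by
    intro x
    rw [← hiter, he]
    rfl
  have hhom : ∀ (m : ℕ) (a b : α), G.Adj a b → G.Adj (f^[m] a) (f^[m] b) := by
    intro m
    induction m with
    | zero => simpa using fun a b h => h
    | succ k ih =>
      intro a b hab
      rw [Function.iterate_succ_apply', Function.iterate_succ_apply']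
      exact hf _ _ (ih a b hab)
  have hrefl : ∀ a b, G.Adj (f a) (f b) → G.Adj a b := by
    intro a b hab
    obtain ⟨m, hm⟩ := Nat.exists_eq_succ_of_ne_zero hn.ne'
    have h1 : G.Adj (f^[m] (f a)) (f^[m] (f b)) := hhom m _ _ hab
    rw [← Function.iterate_succ_apply, ← Function.iterate_succ_apply, ← hm, hid, hid] at h1
    exact h1
  refine ⟨⟨Equiv.ofBijective ψ hbψ, ?_⟩⟩
  intro a b
  constructor
  · intro hadj
    exact hrefl a b (φ.map_adj hadj)
  · intro h
    exact ψ.map_adj h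
end

section
/- Let G be a connected finite simple graph and suppose ψ is a weak oddomorphism from a graph F to G. Then there exists a connected subgraph F̂ of F such that the restriction of ψ to V(F̂) is an oddomorphism from F̂ to G. -/
open SimpleGraph

variable {α β : Type}

lemma natCast_zmod_two_eq_one_iff (n : ℕ) : (n : ZMod 2) = 1 ↔ Odd n := by
  rw [Nat.odd_iff, ← ZMod.natCast_mod n 2]
  rcases Nat.mod_two_eq_zero_or_one n with h | h <;> rw [h] <;> simp

lemma natCast_zmod_two_eq_zero_iff (n : ℕ) : (n : ZMod 2) = 0 ↔ Even n := by
  rw [Nat.even_iff, ← ZMod.natCast_mod n 2]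
  rcases Nat.mod_two_eq_zero_or_one n with h | h <;> rw [h] <;> simp

lemma sum_boole_ncard {γ : Type} [Fintype γ] (P : γ → Prop) [DecidablePred P] :
    (∑ x : γ, (if P x then (1 : ZMod 2) else 0)) = (({x | P x}.ncard : ZMod 2)) := by
  classical
  rw [Finset.sum_boole]
  congr 1
  rw [Set.ncard_eq_toFinset_card', Set.toFinset_setOf]

def OddIn {γ : Type} (H : SimpleGraph γ) (G : SimpleGraph β) (φ : H →g G)
    (C : H.ConnectedComponent) (v : β) : Set γ :=
  {a | a ∈ C.supp ∧ φ a = v ∧ IsOddVertex H G φ a}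

lemma mem_supp_of_adj {γ : Type} {H : SimpleGraph γ} {C : H.ConnectedComponent}
    {a b : γ} (hab : H.Adj a b) (ha : a ∈ C.supp) : b ∈ C.supp := by
  rw [ConnectedComponent.mem_supp_iff] at ha ⊢
  rw [← ha]
  exact ConnectedComponent.sound hab.symm.reachable

lemma oddIn_adj {γ : Type} [Fintype γ] {H : SimpleGraph γ} {G : SimpleGraph β}
    {φ : H →g G} (hdich : ∀ a, IsOddVertex H G φ a ∨ IsEvenVertex H G φ a)
    (C : H.ConnectedComponent) {u v : β} (huv : G.Adj u v) :
    ((OddIn H G φ C u).ncard : ZMod 2) = ((OddIn H G φ C v).ncard : ZMod 2) := by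
  classical
  have claim1 : ∀ u' v' : β, G.Adj u' v' →
      (∑ a : γ, ∑ b : γ, (if a ∈ C.supp ∧ φ a = u' then (1 : ZMod 2) else 0) *
        ((if b ∈ C.supp ∧ φ b = v' then 1 else 0) * (if H.Adj a b then 1 else 0)))
      = ((OddIn H G φ C u').ncard : ZMod 2) := by
    intro u' v' h
    show _ = (({a | a ∈ C.supp ∧ φ a = u' ∧ IsOddVertex H G φ a}).ncard : ZMod 2)
    rw [← sum_boole_ncard (fun a => a ∈ C.supp ∧ φ a = u' ∧ IsOddVertex H G φ a)]
    apply Finset.sum_congr rfl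
    intro a _
    by_cases ha : a ∈ C.supp ∧ φ a = u'
    · have hinner : ∀ b : γ,
          ((if b ∈ C.supp ∧ φ b = v' then (1 : ZMod 2) else 0) * (if H.Adj a b then 1 else 0))
          = (if H.Adj a b ∧ φ b = v' then 1 else 0) := by
        intro b
        by_cases hab : H.Adj a b
        · have hb : b ∈ C.supp := mem_supp_of_adj hab ha.1
          simp [hab, hb]
        · simp [hab]
      simp only [if_pos ha, one_mul, hinner]
      rw [sum_boole_ncard (fun b => H.Adj a b ∧ φ b = v')]
      have hset : {b | H.Adj a b ∧ φ b = v'} = H.neighborSet a ∩ (⇑φ) ⁻¹' {v'} := by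
        ext b; simp [SimpleGraph.mem_neighborSet]
      rw [hset]
      have hGadj : G.Adj (φ a) v' := by rw [ha.2]; exact h
      rcases hdich a with ho | he
      · rw [(natCast_zmod_two_eq_one_iff _).2 (ho v' hGadj)]
        rw [if_pos ⟨ha.1, ha.2, ho⟩]
      · rw [(natCast_zmod_two_eq_zero_iff _).2 (he v' hGadj)]
        rw [if_neg]
        rintro ⟨-, -, ho⟩
        exact (Nat.not_odd_iff_even.mpr (he v' hGadj)) (ho v' hGadj)
    · have ha' : ¬(a ∈ C.supp ∧ φ a = u' ∧ IsOddVertex H G φ a) := fun h' => ha ⟨h'.1, h'.2.1⟩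
      rw [if_neg ha']
      rw [Finset.sum_eq_zero]
      intro b _
      rw [if_neg ha, zero_mul]
  have claim2 :
      (∑ a : γ, ∑ b : γ, (if a ∈ C.supp ∧ φ a = u then (1 : ZMod 2) else 0) *
        ((if b ∈ C.supp ∧ φ b = v then 1 else 0) * (if H.Adj a b then 1 else 0)))
      = (∑ a : γ, ∑ b : γ, (if a ∈ C.supp ∧ φ a = v then (1 : ZMod 2) else 0) *
        ((if b ∈ C.supp ∧ φ b = u then 1 else 0) * (if H.Adj a b then 1 else 0))) := by
    rw [Finset.sum_comm]
    apply Finset.sum_congr rfl; intro a _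
    apply Finset.sum_congr rfl; intro b _
    have hA : H.Adj b a = H.Adj a b := propext (H.adj_comm b a)
    rw [hA]; ring
  rw [← claim1 u v huv, claim2, claim1 v u huv.symm]

lemma oddIn_reach {γ : Type} [Fintype γ] {H : SimpleGraph γ} {G : SimpleGraph β}
    {φ : H →g G} (hdich : ∀ a, IsOddVertex H G φ a ∨ IsEvenVertex H G φ a)
    (C : H.ConnectedComponent) {u v : β} (h : G.Reachable u v) :
    ((OddIn H G φ C u).ncard : ZMod 2) = ((OddIn H G φ C v).ncard : ZMod 2) := by
  obtain ⟨p⟩ := h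
  induction p with
  | nil => rfl
  | cons h q ih => exact (oddIn_adj hdich C h).trans ih
/-- If `G` is a connected finite simple graph and `ψ` is a weak
oddomorphism from `F` to `G`, then there is a *connected* subgraph `F̂` of `F` such that
the restriction of `ψ` to `V(F̂)` is an oddomorphism from `F̂` to `G`. -/
theorem weakOddomorphism_connected_subgraph [Fintype α] [Fintype β]
    (F : SimpleGraph α) (G : SimpleGraph β) (hG : G.Connected)
    (ψ : F →g G) (hψ : IsWeakOddomorphism F G ψ) :
    ∃ Fhat : F.Subgraph, Fhat.coe.Connected ∧ IsOddomorphism Fhat.coe G (ψ.comp Fhat.hom) := by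
  classical
  obtain ⟨F', hFo⟩ := hψ
  have h1 := hFo.1
  have h2 := hFo.2
  set γ := ↥F'.verts
  haveI : Fintype γ := Fintype.ofFinite _
  set H : SimpleGraph γ := F'.coe with hH
  set φ : H →g G := ψ.comp F'.hom with hφdef
  haveI : Fintype H.ConnectedComponent := Fintype.ofFinite _
  -- fibre decomposition over components
  have hsum : ∀ v : β, ({a : γ | φ a = v ∧ IsOddVertex H G φ a}.ncard : ZMod 2)
      = ∑ C : H.ConnectedComponent, ((OddIn H G φ C v).ncard : ZMod 2) := by
    intro v
    rw [← Nat.cast_sum]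
    congr 1
    rw [Set.ncard_eq_toFinset_card', Set.toFinset_setOf]
    rw [Finset.card_eq_sum_card_fiberwise (f := H.connectedComponentMk) (t := Finset.univ)
      (fun x _ => Finset.mem_univ _)]
    apply Finset.sum_congr rfl
    intro C _
    rw [Finset.filter_filter]
    have hset : OddIn H G φ C v
        = {a : γ | (φ a = v ∧ IsOddVertex H G φ a) ∧ H.connectedComponentMk a = C} := by
      ext a
      simp only [OddIn, Set.mem_setOf_eq, ConnectedComponent.mem_supp_iff]
      tauto
    rw [hset, Set.ncard_eq_toFinset_card', Set.toFinset_setOf]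
  -- find a good component
  obtain ⟨v0⟩ := hG.nonempty
  have h2' : ({a : γ | φ a = v0 ∧ IsOddVertex H G φ a}.ncard : ZMod 2) = 1 :=
    (natCast_zmod_two_eq_one_iff _).2 (h2 v0)
  rw [hsum v0] at h2'
  have hex : ∃ C : H.ConnectedComponent, ((OddIn H G φ C v0).ncard : ZMod 2) = 1 := by
    by_contra hc
    push_neg at hc
    have hz : ∀ C : H.ConnectedComponent, ((OddIn H G φ C v0).ncard : ZMod 2) = 0 := by
      intro C
      rcases Nat.even_or_odd (OddIn H G φ C v0).ncard with he | ho
      · exact (natCast_zmod_two_eq_zero_iff _).2 he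
      · exact absurd ((natCast_zmod_two_eq_one_iff _).2 ho) (hc C)
    rw [Finset.sum_congr rfl (fun C _ => hz C)] at h2'
    simp at h2'
  obtain ⟨C, hC1⟩ := hex
  have hCall : ∀ v : β, Odd (OddIn H G φ C v).ncard := by
    intro v
    rw [← natCast_zmod_two_eq_one_iff, ← oddIn_reach h1 C (hG.preconnected v0 v)]
    exact hC1
  -- build the induced subgraph on the support of C
  set S : Set α := Subtype.val '' C.supp with hS
  have hSsub : S ⊆ F'.verts := by rintro _ ⟨a, -, rfl⟩; exact a.2
  set Fhat : F.Subgraph := F'.induce S with hFhat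
  have hverts : Fhat.verts = S := rfl
  let ι : ↥Fhat.verts → γ := fun x => ⟨x.1, hSsub x.2⟩
  have hιinj : Function.Injective ι := by
    intro x y h
    have h' : (ι x).1 = (ι y).1 := congrArg Subtype.val h
    exact Subtype.ext h'
  have hιC : ∀ x : ↥Fhat.verts, ι x ∈ C.supp := by
    intro x
    obtain ⟨a, haC, hav⟩ := x.2
    have : ι x = a := Subtype.ext hav.symm
    rw [this]; exact haC
  have hmemS : ∀ {b : γ}, b ∈ C.supp → b.1 ∈ S := fun {b} hb => ⟨b, hb, rfl⟩
  have hadj : ∀ x y : ↥Fhat.verts, Fhat.coe.Adj x y ↔ H.Adj (ι x) (ι y) := by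
    intro x y
    constructor
    · rintro ⟨-, -, h⟩
      exact h
    · intro h
      exact ⟨x.2, y.2, h⟩
  have hφeq : ∀ x : ↥Fhat.verts, (ψ.comp Fhat.hom) x = φ (ι x) := fun _ => rfl
  -- neighbourhood counts transfer
  have hnbr : ∀ (x : ↥Fhat.verts) (v : β),
      ι '' (Fhat.coe.neighborSet x ∩ (⇑(ψ.comp Fhat.hom)) ⁻¹' {v})
        = H.neighborSet (ι x) ∩ (⇑φ) ⁻¹' {v} := by
    intro x v
    ext b
    constructor
    · rintro ⟨y, ⟨hy1, hy2⟩, rfl⟩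
      exact ⟨(hadj x y).1 hy1, hy2⟩
    · rintro ⟨hb1, hb2⟩
      have hbC : b ∈ C.supp := mem_supp_of_adj hb1 (hιC x)
      exact ⟨⟨b.1, hmemS hbC⟩, ⟨(hadj x _).2 hb1, hb2⟩, Subtype.ext rfl⟩
  have hncard : ∀ (x : ↥Fhat.verts) (v : β),
      (Fhat.coe.neighborSet x ∩ (⇑(ψ.comp Fhat.hom)) ⁻¹' {v}).ncard
        = (H.neighborSet (ι x) ∩ (⇑φ) ⁻¹' {v}).ncard := by
    intro x v
    rw [← hnbr x v, Set.ncard_image_of_injective _ hιinj]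
  have hodd : ∀ x : ↥Fhat.verts,
      IsOddVertex Fhat.coe G (ψ.comp Fhat.hom) x ↔ IsOddVertex H G φ (ι x) := by
    intro x
    constructor
    · intro h v hv
      rw [← hncard x v]; exact h v hv
    · intro h v hv
      rw [hncard x v]; exact h v hv
  have heven : ∀ x : ↥Fhat.verts,
      IsEvenVertex Fhat.coe G (ψ.comp Fhat.hom) x ↔ IsEvenVertex H G φ (ι x) := by
    intro x
    constructor
    · intro h v hv
      rw [← hncard x v]; exact h v hv
    · intro h v hv
      rw [hncard x v]; exact h v hv
  refine ⟨Fhat, ?_, ?_, ?_⟩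
  · -- connectivity
    have key : ∀ (a b : γ) (p : H.Walk a b), a ∈ C.supp → ∀ (hav : a.1 ∈ Fhat.verts)
        (hbv : b.1 ∈ Fhat.verts), Fhat.coe.Reachable ⟨a.1, hav⟩ ⟨b.1, hbv⟩ := by
      intro a b p
      induction p with
      | nil => intro _ hav hbv; exact Reachable.refl _
      | @cons a c b h q ih =>
        intro haC hav hbv
        have hcC : c ∈ C.supp := mem_supp_of_adj h haC
        have hcv : c.1 ∈ Fhat.verts := hmemS hcC
        have hadj' : Fhat.coe.Adj ⟨a.1, hav⟩ ⟨c.1, hcv⟩ := ⟨hav, hcv, h⟩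
        exact hadj'.reachable.trans (ih hcC hcv hbv)
    obtain ⟨a0, ha0⟩ := C.exists_rep
    have ha0C : a0 ∈ C.supp := by
      rw [ConnectedComponent.mem_supp_iff]; exact ha0
    haveI : Nonempty ↥Fhat.verts := ⟨⟨a0.1, hmemS ha0C⟩⟩
    refine ⟨?_⟩
    intro x y
    have hreach : H.Reachable (ι x) (ι y) := by
      have hx := (ConnectedComponent.mem_supp_iff _ _).1 (hιC x)
      have hy := (ConnectedComponent.mem_supp_iff _ _).1 (hιC y)
      exact ConnectedComponent.exact (hx.trans hy.symm)
    obtain ⟨p⟩ := hreach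
    exact key (ι x) (ι y) p (hιC x) x.2 y.2
  · -- dichotomy
    intro x
    exact (h1 (ι x)).imp ((hodd x).2) ((heven x).2)
  · -- fibres
    intro v
    have himg : ι '' {x : ↥Fhat.verts | (ψ.comp Fhat.hom) x = v
        ∧ IsOddVertex Fhat.coe G (ψ.comp Fhat.hom) x} = OddIn H G φ C v := by
      ext b
      constructor
      · rintro ⟨x, ⟨hx1, hx2⟩, rfl⟩
        exact ⟨hιC x, hx1, (hodd x).1 hx2⟩
      · rintro ⟨hbC, hbv, hbodd⟩
        exact ⟨⟨b.1, hmemS hbC⟩, ⟨hbv, (hodd _).2 hbodd⟩, Subtype.ext rfl⟩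
    have := hCall v
    rwa [← himg, Set.ncard_image_of_injective _ hιinj] at this
end

section
/- Let k', k ≥ 3. The cycle C_{k'} admits an oddomorphism to the cycle C_k if and only if k' ≥ k and k' ≡ k mod 2. -/
open SimpleGraph

variable {α β : Type}

/- ### Auxiliary lemmas -/

lemma finValAddOne {n : ℕ} (x : Fin (n+3)) :
    (x + 1).val = if x.val = n+2 then 0 else x.val + 1 := by
  have h := x.is_lt
  rw [Fin.add_def, Fin.val_one]
  split_ifs with h1
  · rw [h1]; simp
  · exact Nat.mod_eq_of_lt (by omega)

lemma finValSubOne {n : ℕ} (x : Fin (n+3)) :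
    (x - 1).val = if x.val = 0 then n+2 else x.val - 1 := by
  have h := x.is_lt
  rw [Fin.sub_def, Fin.val_one]
  show (n + 3 - 1 + x.val) % (n+3) = _
  split_ifs with h1
  · rw [h1]; exact Nat.mod_eq_of_lt (by omega)
  · have e : n + 3 - 1 + x.val = (n+3) + (x.val - 1) := by omega
    rw [e, Nat.add_mod_left]
    exact Nat.mod_eq_of_lt (by omega)

lemma cgAdj {n : ℕ} {u v : Fin (n+3)} :
    (cycleGraph (n+3)).Adj u v ↔ u = v + 1 ∨ v = u + 1 := by
  have h : (cycleGraph (n+3)).Adj u v ↔ u - v = 1 ∨ v - u = 1 := cycleGraph_adj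
  rw [h, sub_eq_iff_eq_add, sub_eq_iff_eq_add, add_comm (1:Fin (n+3)) v,
    add_comm (1:Fin (n+3)) u]

lemma cgNbhd {n : ℕ} (a : Fin (n+3)) :
    (cycleGraph (n+3)).neighborSet a = {a - 1, a + 1} := cycleGraph_neighborSet

lemma finSubOneNeAddOne {n : ℕ} (x : Fin (n+3)) : x - 1 ≠ x + 1 := by
  have h := x.is_lt
  rw [Fin.ne_iff_vne, finValSubOne, finValAddOne]
  split_ifs <;> omega

lemma finAddOneNeSubOne {n : ℕ} (x : Fin (n+3)) : x + 1 ≠ x - 1 :=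
  (finSubOneNeAddOne x).symm

lemma finSubAddCancel {n : ℕ} (x : Fin (n+3)) : x - 1 + 1 = x := by
  have h := x.is_lt
  rw [Fin.ext_iff, finValAddOne, finValSubOne]
  split_ifs <;> omega

lemma finAddTwoNe {n : ℕ} (x : Fin (n+3)) : x + 1 + 1 ≠ x := by
  have h := x.is_lt
  rw [Fin.ne_iff_vne, finValAddOne, finValAddOne]
  split_ifs <;> omega

lemma cgAdjAddOne {n : ℕ} (a : Fin (n+3)) : (cycleGraph (n+3)).Adj a (a+1) := by
  rw [cgAdj]; right; rfl

lemma cgAdjSubOne {n : ℕ} (a : Fin (n+3)) : (cycleGraph (n+3)).Adj a (a-1) := by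
  rw [cgAdj]; left; rw [finSubAddCancel]

lemma pairInterNcard {A B : Type} [DecidableEq B] (f : A → B) {x y : A} (hxy : x ≠ y) (v : B) :
    (({x, y} : Set A) ∩ f ⁻¹' {v}).ncard
      = (if f x = v then 1 else 0) + (if f y = v then 1 else 0) := by
  by_cases hx : f x = v <;> by_cases hy : f y = v
  · rw [if_pos hx, if_pos hy]
    have e : ({x, y} : Set A) ∩ f ⁻¹' {v} = {x, y} := by
      ext z; simp only [Set.mem_inter_iff, Set.mem_insert_iff, Set.mem_singleton_iff,
        Set.mem_preimage]
      constructor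
      · exact fun h => h.1
      · rintro (rfl | rfl) <;> simp [hx, hy]
    rw [e, Set.ncard_pair hxy]
  · rw [if_pos hx, if_neg hy]
    have e : ({x, y} : Set A) ∩ f ⁻¹' {v} = {x} := by
      ext z; simp only [Set.mem_inter_iff, Set.mem_insert_iff, Set.mem_singleton_iff,
        Set.mem_preimage]
      constructor
      · rintro ⟨rfl | rfl, h2⟩
        · rfl
        · exact absurd h2 hy
      · rintro rfl; exact ⟨Or.inl rfl, hx⟩
    rw [e, Set.ncard_singleton]
  · rw [if_neg hx, if_pos hy]
    have e : ({x, y} : Set A) ∩ f ⁻¹' {v} = {y} := by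
      ext z; simp only [Set.mem_inter_iff, Set.mem_insert_iff, Set.mem_singleton_iff,
        Set.mem_preimage]
      constructor
      · rintro ⟨rfl | rfl, h2⟩
        · exact absurd h2 hx
        · rfl
      · rintro rfl; exact ⟨Or.inr rfl, hy⟩
    rw [e, Set.ncard_singleton]
  · rw [if_neg hx, if_neg hy]
    have e : ({x, y} : Set A) ∩ f ⁻¹' {v} = ∅ := by
      ext z; simp only [Set.mem_inter_iff, Set.mem_insert_iff, Set.mem_singleton_iff,
        Set.mem_preimage, Set.mem_empty_iff_false, iff_false, not_and]
      rintro (rfl | rfl) <;> assumption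
    rw [e, Set.ncard_empty]

section Classification

variable {n n' : ℕ} (ψ : cycleGraph (n'+3) →g cycleGraph (n+3))

lemma stepPlus (a : Fin (n'+3)) : ψ (a+1) = ψ a + 1 ∨ ψ (a+1) = ψ a - 1 := by
  have h := ψ.map_adj (cgAdjAddOne a)
  rw [cgAdj] at h
  rcases h with h | h
  · right; rw [eq_sub_iff_add_eq]; exact h.symm
  · left; exact h

lemma stepMinus (a : Fin (n'+3)) : ψ (a-1) = ψ a - 1 ∨ ψ (a-1) = ψ a + 1 := by
  have h := ψ.map_adj (cgAdjSubOne a)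
  rw [cgAdj] at h
  rcases h with h | h
  · left; rw [eq_sub_iff_add_eq]; exact h.symm
  · right; exact h

lemma evenOfEq {a : Fin (n'+3)} (h : ψ (a-1) = ψ (a+1)) :
    IsEvenVertex _ _ ψ a := by
  intro v hv
  rw [cgNbhd, pairInterNcard _ (finSubOneNeAddOne a) v, h]
  by_cases hc : ψ (a+1) = v
  · rw [if_pos hc]; exact ⟨1, rfl⟩
  · rw [if_neg hc]; exact Even.zero

lemma oddOfNe {a : Fin (n'+3)} (h : ψ (a-1) ≠ ψ (a+1)) :
    IsOddVertex _ _ ψ a := by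
  intro v hv
  rw [cgNbhd, pairInterNcard _ (finSubOneNeAddOne a) v]
  have hv2 : v = ψ a - 1 ∨ v = ψ a + 1 := by
    rw [cgAdj] at hv
    rcases hv with hv | hv
    · left; rw [eq_sub_iff_add_eq]; exact hv.symm
    · right; exact hv
  rcases stepMinus ψ a with h1 | h1 <;> rcases stepPlus ψ a with h2 | h2
  · rcases hv2 with rfl | rfl
    · rw [if_pos h1, if_neg (fun hc => finAddOneNeSubOne (ψ a) (h2.symm.trans hc))]
      decide
    · rw [if_neg (fun hc => finSubOneNeAddOne (ψ a) (h1.symm.trans hc)), if_pos h2]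
      decide
  · exact absurd (h1.trans h2.symm) h
  · exact absurd (h1.trans h2.symm) h
  · rcases hv2 with rfl | rfl
    · rw [if_neg (fun hc => finAddOneNeSubOne (ψ a) (h1.symm.trans hc)), if_pos h2]
      decide
    · rw [if_pos h1, if_neg (fun hc => finSubOneNeAddOne (ψ a) (h2.symm.trans hc))]
      decide

lemma notOddOfEq {a : Fin (n'+3)} (h : ψ (a-1) = ψ (a+1)) :
    ¬ IsOddVertex _ _ ψ a := fun ho =>
  Nat.not_odd_iff_even.mpr (evenOfEq ψ h _ (ψ.map_adj (cgAdjAddOne a)))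
    (ho _ (ψ.map_adj (cgAdjAddOne a)))

lemma isOddIff {a : Fin (n'+3)} :
    IsOddVertex _ _ ψ a ↔ ψ (a-1) ≠ ψ (a+1) :=
  ⟨fun ho h => notOddOfEq ψ h ho, oddOfNe ψ⟩

lemma natCastZModTwo {c : ℕ} (hc : Odd c) : (c : ZMod 2) = 1 := by
  obtain ⟨m, rfl⟩ := hc
  push_cast
  rw [show ((2:ZMod 2)) = 0 from rfl]
  ring

/-- Backward direction. -/
lemma backwardDir (h : IsOddomorphism _ _ ψ) :
    n + 3 ≤ n' + 3 ∧ (n'+3) % 2 = (n+3) % 2 := by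
  classical
  obtain ⟨h1, h2⟩ := h
  have hsurj : Function.Surjective ψ := by
    intro v
    have hne : {a | ψ a = v ∧ IsOddVertex _ _ ψ a}.Nonempty := by
      apply Set.nonempty_of_ncard_ne_zero
      intro h0
      have := h2 v
      rw [h0] at this
      simp at this
    obtain ⟨a, ha⟩ := hne
    exact ⟨a, ha.1⟩
  constructor
  · have := Fintype.card_le_of_surjective ψ hsurj
    simpa using this
  · -- parity argument in ZMod 2
    set S : Finset (Fin (n'+3)) := Finset.univ.filter (fun a => ¬ ψ (a-1) = ψ (a+1)) with hSdef
    set T : Finset (Fin (n'+3)) := Finset.univ.filter (fun a => ψ (a-1) = ψ (a+1)) with hTdef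
    have hST : T.card + S.card = n' + 3 := by
      rw [hSdef, hTdef, Finset.card_filter_add_card_filter_not]
      simp
    -- S.card is ≡ n + 3 (mod 2)
    have hS : ((S.card : ℕ) : ZMod 2) = ((n+3 : ℕ) : ZMod 2) := by
      have hcard : S.card = ∑ v : Fin (n+3), (S.filter (fun a => ψ a = v)).card :=
        Finset.card_eq_sum_card_fiberwise (fun a _ => Finset.mem_univ (ψ a))
      rw [hcard, Nat.cast_sum]
      have : ∀ v : Fin (n+3), (((S.filter (fun a => ψ a = v)).card : ℕ) : ZMod 2) = 1 := by
        intro v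
        apply natCastZModTwo
        have hseteq : {a : Fin (n'+3) | ψ a = v ∧ IsOddVertex _ _ ψ a}
            = ↑(S.filter (fun a => ψ a = v)) := by
          ext a
          simp only [Set.mem_setOf_eq, Finset.coe_filter, hSdef, Finset.mem_filter,
            Finset.mem_univ, true_and]
          rw [isOddIff]
          tauto
        have := h2 v
        rw [hseteq, Set.ncard_coe_finset] at this
        exact this
      rw [Finset.sum_congr rfl (fun v _ => this v), Finset.sum_const, Finset.card_univ,
        Fintype.card_fin, nsmul_eq_mul, mul_one]
    -- T.card is even
    have hT : ((T.card : ℕ) : ZMod 2) = 0 := by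
      have hcard : T.card = ∑ a : Fin (n'+3), if ψ (a-1) = ψ (a+1) then 1 else 0 := by
        rw [hTdef, Finset.card_filter]
      rw [hcard, Nat.cast_sum]
      have key : ∀ a : Fin (n'+3),
          (((if ψ (a-1) = ψ (a+1) then 1 else 0 : ℕ)) : ZMod 2)
            = (if ψ a = ψ (a-1) + 1 then (0:ZMod 2) else 1)
              + (if ψ (a+1) = ψ a + 1 then (0:ZMod 2) else 1) := by
        intro a
        rcases stepMinus ψ a with h1 | h1 <;> rcases stepPlus ψ a with hp | hp
        · -- ψ(a-1) = ψa - 1, ψ(a+1) = ψa + 1 : pass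
          rw [if_neg (fun hc => finSubOneNeAddOne (ψ a) ((h1.symm.trans hc).trans hp)),
            if_pos (by rw [h1, finSubAddCancel]), if_pos hp]
          decide
        · -- ψ(a-1) = ψa - 1, ψ(a+1) = ψa - 1 : turn
          rw [if_pos (h1.trans hp.symm),
            if_pos (by rw [h1, finSubAddCancel]),
            if_neg (fun hc => finAddOneNeSubOne (ψ a) (hc.symm.trans hp))]
          decide
        · -- ψ(a-1) = ψa + 1, ψ(a+1) = ψa + 1 : turn
          rw [if_pos (h1.trans hp.symm),
            if_neg (fun hc => finAddTwoNe (ψ a) (by rw [← h1]; exact hc.symm)),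
            if_pos hp]
          decide
        · -- ψ(a-1) = ψa + 1, ψ(a+1) = ψa - 1 : pass
          rw [if_neg (fun hc => finAddOneNeSubOne (ψ a) ((h1.symm.trans hc).trans hp)),
            if_neg (fun hc => finAddTwoNe (ψ a) (by rw [← h1]; exact hc.symm)),
            if_neg (fun hc => finAddOneNeSubOne (ψ a) (hc.symm.trans hp))]
          decide
      rw [Finset.sum_congr rfl (fun a _ => key a), Finset.sum_add_distrib]
      have hre : (∑ a : Fin (n'+3), if ψ a = ψ (a-1) + 1 then (0:ZMod 2) else 1)
          = ∑ a : Fin (n'+3), if ψ (a+1) = ψ a + 1 then (0:ZMod 2) else 1 := by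
        apply Fintype.sum_equiv (Equiv.subRight (1 : Fin (n'+3)))
          (fun a => if ψ a = ψ (a-1) + 1 then (0:ZMod 2) else 1)
          (fun a => if ψ (a+1) = ψ a + 1 then (0:ZMod 2) else 1)
        intro a
        show (if ψ a = ψ (a-1) + 1 then (0:ZMod 2) else 1)
          = (if ψ ((a-1)+1) = ψ (a-1) + 1 then (0:ZMod 2) else 1)
        rw [finSubAddCancel]
      rw [← hre, ← two_mul, show ((2:ZMod 2)) = 0 from rfl, zero_mul]
    have hmain : (((n'+3 : ℕ)) : ZMod 2) = ((n+3 : ℕ) : ZMod 2) := by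
      rw [← hST]
      push_cast
      rw [hS, hT]
      push_cast
      ring
    have := (ZMod.natCast_eq_natCast_iff _ _ _).mp hmain
    exact this

end Classification

/- ### Forward construction -/

def foldMap (n n' : ℕ) : Fin (n'+3) → Fin (n+3) := fun i =>
  if h : i.val < n+3 then ⟨i.val, h⟩
  else if (i.val - (n+3)) % 2 = 0 then ⟨0, by omega⟩ else ⟨n+2, by omega⟩

lemma foldMapVal (n n' : ℕ) (i : Fin (n'+3)) :
    (foldMap n n' i).val
      = if i.val < n+3 then i.val else if (i.val - (n+3)) % 2 = 0 then 0 else n+2 := by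
  unfold foldMap
  split_ifs <;> rfl

section Forward

variable {n n' : ℕ} (hle : n ≤ n') (hpar : n' % 2 = n % 2)
include hle hpar

lemma foldMapStep (a : Fin (n'+3)) :
    foldMap n n' (a+1) = foldMap n n' a + 1 ∨ foldMap n n' (a+1) = foldMap n n' a - 1 := by
  have ha := a.is_lt
  simp only [Fin.ext_iff, finValAddOne, finValSubOne, foldMapVal]
  split_ifs <;> omega

lemma foldMapNe {a : Fin (n'+3)} (h : a.val < n+3) :
    foldMap n n' (a-1) ≠ foldMap n n' (a+1) := by
  have ha := a.is_lt
  simp only [Fin.ne_iff_vne, finValAddOne, finValSubOne, foldMapVal]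
  split_ifs <;> omega

lemma foldMapEq {a : Fin (n'+3)} (h : ¬ a.val < n+3) :
    foldMap n n' (a-1) = foldMap n n' (a+1) := by
  have ha := a.is_lt
  simp only [Fin.ext_iff, finValAddOne, finValSubOne, foldMapVal]
  split_ifs <;> omega

/-- The folding homomorphism. -/
def foldHom : cycleGraph (n'+3) →g cycleGraph (n+3) where
  toFun := foldMap n n'
  map_rel' := by
    intro a b hab
    rw [cgAdj] at hab ⊢
    rcases hab with rfl | rfl
    · rcases foldMapStep hle hpar b with h | h
      · left; exact h
      · right; rw [h, finSubAddCancel]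
    · rcases foldMapStep hle hpar a with h | h
      · right; exact h
      · left; rw [h, finSubAddCancel]

lemma foldHom_oddomorphism : IsOddomorphism _ _ (foldHom hle hpar) := by
  constructor
  · intro a
    by_cases hc : a.val < n+3
    · exact Or.inl (oddOfNe _ (foldMapNe hle hpar hc))
    · exact Or.inr (evenOfEq _ (foldMapEq hle hpar hc))
  · intro v
    have hv : v.val < n'+3 := lt_of_lt_of_le v.is_lt (by omega)
    have hseteq : {a : Fin (n'+3) | foldHom hle hpar a = v
        ∧ IsOddVertex _ _ (foldHom hle hpar) a} = {⟨v.val, hv⟩} := by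
      ext a
      simp only [Set.mem_setOf_eq, Set.mem_singleton_iff]
      constructor
      · rintro ⟨hfa, hodd⟩
        have hlt : a.val < n+3 := by
          by_contra hcon
          exact notOddOfEq _ (foldMapEq hle hpar hcon) hodd
        have : (foldHom hle hpar a).val = v.val := by rw [hfa]
        rw [Fin.ext_iff]
        rw [show (foldHom hle hpar a).val = (foldMap n n' a).val from rfl,
          foldMapVal, if_pos hlt] at this
        exact this
      · rintro rfl
        have hlt : (⟨v.val, hv⟩ : Fin (n'+3)).val < n+3 := v.is_lt
        constructor
        · rw [Fin.ext_iff]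
          rw [show (foldHom hle hpar ⟨v.val, hv⟩).val = (foldMap n n' ⟨v.val, hv⟩).val from rfl,
            foldMapVal, if_pos hlt]
        · exact oddOfNe _ (foldMapNe hle hpar hlt)
    rw [hseteq, Set.ncard_singleton]
    exact ⟨0, rfl⟩

end Forward

/-- For `k', k ≥ 3`, the cycle `C_{k'}` admits an oddomorphism to the
cycle `C_k` if and only if `k' ≥ k` and `k' ≡ k (mod 2)`. -/
theorem cycle_oddomorphism_iff (k' k : ℕ) (hk' : 3 ≤ k') (hk : 3 ≤ k) :
    (∃ ψ : cycleGraph k' →g cycleGraph k,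
        IsOddomorphism (cycleGraph k') (cycleGraph k) ψ) ↔
      (k ≤ k' ∧ k' % 2 = k % 2) := by
  obtain ⟨n', rfl⟩ : ∃ m, k' = m + 3 := ⟨k' - 3, by omega⟩
  obtain ⟨n, rfl⟩ : ∃ m, k = m + 3 := ⟨k - 3, by omega⟩
  constructor
  · rintro ⟨ψ, h⟩
    exact backwardDir ψ h
  · rintro ⟨hle, hpar⟩
    have hle' : n ≤ n' := by omega
    have hpar' : n' % 2 = n % 2 := by omega
    exact ⟨foldHom hle' hpar', foldHom_oddomorphism hle' hpar'⟩
end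

section
/- If n ∈ ℕ and the complete graph K_n admits a weak oddomorphism to a graph G, then G is isomorphic to K_n. -/
open SimpleGraph

variable {α β : Type}

/-- If the complete graph `K_n` admits a weak oddomorphism to a graph
`G`, then `G` is isomorphic to `K_n`. -/
theorem weakOddomorphism_completeGraph (n : ℕ) [Fintype β] (G : SimpleGraph β)
    (h : ∃ ψ : (⊤ : SimpleGraph (Fin n)) →g G,
      IsWeakOddomorphism (⊤ : SimpleGraph (Fin n)) G ψ) :
    Nonempty (G ≃g (⊤ : SimpleGraph (Fin n))) := by
  obtain ⟨ψ, F', hodd⟩ := h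
  have hsurj : Function.Surjective ψ := by
    intro v
    have h1 := hodd.2 v
    obtain ⟨a, ha, -⟩ := Set.nonempty_of_ncard_ne_zero h1.pos.ne'
    exact ⟨F'.hom a, ha⟩
  have hinj : Function.Injective ψ := by
    intro a b hab
    by_contra hne
    exact (ψ.map_rel (by exact hne : (⊤ : SimpleGraph (Fin n)).Adj a b)).ne hab
  have e := Equiv.ofBijective ψ ⟨hinj, hsurj⟩
  have hG : G = ⊤ := by
    ext u v
    simp only [top_adj]
    constructor
    · exact Adj.ne
    · intro huv
      obtain ⟨a, rfl⟩ := hsurj u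
      obtain ⟨b, rfl⟩ := hsurj v
      exact ψ.map_rel (fun hab => huv (by rw [hab]) : (⊤ : SimpleGraph (Fin n)).Adj a b)
  subst hG
  exact ⟨Iso.completeGraph e.symm⟩
end

section
/- Suppose G contains K_{1,d} as an induced subgraph and F admits a weak oddomorphism to G. Then F contains K_{1,d} as an induced subgraph. -/
open SimpleGraph

variable {α β : Type}

/-!
An odd vertex `a` has an odd, hence nonzero, number of neighbours over every neighbour of
`ψ a`, so `ψ` maps the neighbourhood of `a` onto that of `ψ a`. Since every fibre of an
oddomorphism contains an odd vertex, the centre of an induced star in `G` has such a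
preimage `a`; choosing a preimage of each leaf among the neighbours of `a` gives a
homomorphic copy of the star in `F`, and it is an induced copy because it lies over an
induced copy in `G`.
-/

def IsLocallySurjectiveAt (F : SimpleGraph α) (G : SimpleGraph β) (ψ : F →g G) (a : α) :
    Prop :=
  ∀ v, G.Adj (ψ a) v → ∃ b, F.Adj a b ∧ ψ b = v

section

variable {F : SimpleGraph α} {G : SimpleGraph β} {ψ : F →g G}

theorem IsOddVertex.isLocallySurjectiveAt {a : α} (ha : IsOddVertex F G ψ a) :
    IsLocallySurjectiveAt F G ψ a := fun v hv =>
  Set.nonempty_of_ncard_ne_zero (ha v hv).pos.ne'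

theorem IsOddomorphism.exists_isLocallySurjectiveAt (hψ : IsOddomorphism F G ψ) (c : β) :
    ∃ a, ψ a = c ∧ IsLocallySurjectiveAt F G ψ a := by
  obtain ⟨a, rfl, ha⟩ := Set.nonempty_of_ncard_ne_zero (hψ.2 c).pos.ne'
  exact ⟨a, rfl, ha.isLocallySurjectiveAt⟩

theorem IsLocallySurjectiveAt.of_comp {γ : Type} {H : SimpleGraph γ} {h : H →g F} {a : γ}
    (ha : IsLocallySurjectiveAt H G (ψ.comp h) a) : IsLocallySurjectiveAt F G ψ (h a) :=
  fun v hv => by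
    obtain ⟨b, hab, rfl⟩ := ha v hv
    exact ⟨h b, h.map_adj hab, rfl⟩

theorem IsWeakOddomorphism.exists_isLocallySurjectiveAt (hψ : IsWeakOddomorphism F G ψ)
    (c : β) : ∃ a, ψ a = c ∧ IsLocallySurjectiveAt F G ψ a := by
  obtain ⟨F', hF'⟩ := hψ
  obtain ⟨a, rfl, ha⟩ := hF'.exists_isLocallySurjectiveAt c
  exact ⟨a, rfl, ha.of_comp⟩

theorem IsLocallySurjectiveAt.exists_lift_star {ι κ : Type*} [Unique ι] {a : α}
    (ha : IsLocallySurjectiveAt F G ψ a) (g : completeBipartiteGraph ι κ →g G)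
    (hcentre : ψ a = g (Sum.inl default)) :
    ∃ f : completeBipartiteGraph ι κ →g F, ∀ x, ψ (f x) = g x := by
  have hleaf (k : κ) : G.Adj (ψ a) (g (Sum.inr k)) := hcentre ▸ g.map_adj (by simp)
  choose b hFb hψb using fun k => ha _ (hleaf k)
  refine ⟨⟨Sum.elim (fun _ => a) b, ?_⟩, ?_⟩
  · rintro (i | k) (j | l) hadj
    · simp at hadj
    · exact hFb l
    · exact (hFb k).symm
    · simp at hadj
  · rintro (i | k)
    · simp [hcentre, Subsingleton.elim i default]
    · exact hψb k

end

def SimpleGraph.Hom.toEmbeddingOfCompEq {γ : Type*} {H : SimpleGraph γ} {F : SimpleGraph α}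
    {G : SimpleGraph β} (f : H →g F) (ψ : F →g G) (g : H ↪g G) (hfg : ∀ x, ψ (f x) = g x) :
    H ↪g F where
  toFun := f
  inj' x y hxy := g.injective (by rw [← hfg, ← hfg, hxy])
  map_rel_iff' {x y} := ⟨fun h => g.map_rel_iff.1 (hfg x ▸ hfg y ▸ ψ.map_adj h), f.map_adj⟩

theorem weakOddomorphism_inducedStar_general
    (F : SimpleGraph α) (G : SimpleGraph β) (d : ℕ)
    (hG : Nonempty (completeBipartiteGraph (Fin 1) (Fin d) ↪g G))
    (h : ∃ ψ : F →g G, IsWeakOddomorphism F G ψ) :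
    Nonempty (completeBipartiteGraph (Fin 1) (Fin d) ↪g F) := by
  obtain ⟨g⟩ := hG
  obtain ⟨ψ, hψ⟩ := h
  obtain ⟨a, hcentre, ha⟩ := hψ.exists_isLocallySurjectiveAt (g (Sum.inl 0))
  obtain ⟨f, hf⟩ := ha.exists_lift_star g.toHom hcentre
  exact ⟨f.toEmbeddingOfCompEq ψ g hf⟩

/-- If `G` contains the star `K_{1,d}` as an induced subgraph and `F`
admits a weak oddomorphism to `G`, then `F` contains `K_{1,d}` as an induced subgraph. -/
theorem weakOddomorphism_inducedStar [Fintype α] [Fintype β]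
    (F : SimpleGraph α) (G : SimpleGraph β) (d : ℕ)
    (hG : Nonempty (completeBipartiteGraph (Fin 1) (Fin d) ↪g G))
    (h : ∃ ψ : F →g G, IsWeakOddomorphism F G ψ) :
    Nonempty (completeBipartiteGraph (Fin 1) (Fin d) ↪g F) :=
  weakOddomorphism_inducedStar_general F G d hG h
end
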